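/- Fixed points of tanh: For 0 < β ≤ 1 the equation tanh(βx) = x has exactly one real solution, namely x = 0. For β > 1 the equation tanh(βx) = x has exactly three real solutions: 0, m(β) and −m(β), where m(β) > 0. -/

import Mathlib

open Real Set

lemma tanh_hasDerivAt (x : ℝ) :
    HasDerivAt Real.tanh (1 / Real.cosh x ^ 2) x := by
  have h := (Real.hasDerivAt_sinh x).div (Real.hasDerivAt_cosh x)
    (Real.cosh_pos x).ne'
  have heq : (Real.cosh x * Real.cosh x - Real.sinh x * Real.sinh x) /
      Real.cosh x ^ 2 = 1 / Real.cosh x ^ 2 := by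
    rw [show Real.cosh x * Real.cosh x - Real.sinh x * Real.sinh x
        = Real.cosh x ^ 2 - Real.sinh x ^ 2 by ring, Real.cosh_sq_sub_sinh_sq]
  have h2 : HasDerivAt (fun y => Real.sinh y / Real.cosh y) (1 / Real.cosh x ^ 2) x := by
    rw [← heq]; exact h
  exact h2.congr_of_eventuallyEq
    (Filter.Eventually.of_forall fun y => (Real.tanh_eq_sinh_div_cosh y))

lemma continuous_tanh' : Continuous Real.tanh :=
  continuous_iff_continuousAt.2 fun x => (tanh_hasDerivAt x).continuousAt

lemma tanh_lt_one' (x : ℝ) : Real.tanh x < 1 := by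
  rw [Real.tanh_eq_sinh_div_cosh, div_lt_one (Real.cosh_pos x)]
  nlinarith [Real.cosh_sub_sinh x, Real.exp_pos (-x)]

lemma self_sub_tanh_strictMono : StrictMonoOn (fun x => x - Real.tanh x) (Ici (0:ℝ)) := by
  have hd : ∀ x : ℝ, HasDerivAt (fun x => x - Real.tanh x)
      (1 - 1 / Real.cosh x ^ 2) x := fun x =>
    (hasDerivAt_id x).sub (tanh_hasDerivAt x)
  apply strictMonoOn_of_deriv_pos (convex_Ici 0)
  · exact (continuous_id.sub continuous_tanh').continuousOn
  · intro x hx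
    rw [interior_Ici] at hx
    have hx' : 0 < x := hx
    rw [(hd x).deriv]
    have hc : 1 < Real.cosh x := by
      rw [← Real.cosh_zero, Real.cosh_lt_cosh]
      rwa [abs_zero, abs_of_pos hx']
    have h2 : 1 < Real.cosh x ^ 2 := by nlinarith
    have : 1 / Real.cosh x ^ 2 < 1 := by
      rw [div_lt_one (by positivity)]; exact h2
    linarith

lemma tanh_lt_self {x : ℝ} (hx : 0 < x) : Real.tanh x < x := by
  have := self_sub_tanh_strictMono (self_mem_Ici) (le_of_lt hx : (0:ℝ) ≤ x) hx
  simpa using this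

lemma concave_ratio {G : ℝ → ℝ} (hG : StrictConcaveOn ℝ (Ici (0:ℝ)) G)
    (h0 : G 0 = 0) {u v : ℝ} (hu : 0 < u) (huv : u < v) :
    (u / v) * G v < G u := by
  have hv : 0 < v := hu.trans huv
  have hb : 0 < u / v := by positivity
  have ha : 0 < 1 - u / v := by
    have : u / v < 1 := (div_lt_one hv).2 huv
    linarith
  have key := hG.2 (self_mem_Ici) (le_of_lt hv : (0:ℝ) ≤ v)
    (by exact fun h => absurd h.symm (ne_of_gt hv)) ha hb (by ring)
  have hx : (1 - u / v) • (0:ℝ) + (u / v) • v = u := by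
    field_simp
    rw [smul_zero, zero_add, smul_eq_mul, div_mul_cancel₀ _ hv.ne']
  rw [hx] at key
  simpa [h0] using key

theorem tanh_fixed_points :
    (∀ β : ℝ, 0 < β → β ≤ 1 → ∀ x : ℝ, Real.tanh (β * x) = x ↔ x = 0) ∧
    (∀ β : ℝ, 1 < β → ∃ m : ℝ, 0 < m ∧
      ∀ x : ℝ, Real.tanh (β * x) = x ↔ x = 0 ∨ x = m ∨ x = -m) := by
  constructor
  · -- case 0 < β ≤ 1
    intro β hβ hβ1 x
    constructor
    · intro h
      by_contra hx0
      rcases lt_or_gt_of_ne hx0 with hneg | hpos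
      · have h1 : Real.tanh (β * (-x)) < β * (-x) := tanh_lt_self (by nlinarith)
        rw [show β * (-x) = -(β * x) by ring, Real.tanh_neg] at h1
        nlinarith
      · have h1 : Real.tanh (β * x) < β * x := tanh_lt_self (by nlinarith)
        nlinarith
    · rintro rfl; simp
  · -- case β > 1
    intro β hβ
    have hβ0 : (0:ℝ) < β := by linarith
    set G : ℝ → ℝ := fun x => Real.tanh (β * x) with hGdef
    set g : ℝ → ℝ := fun x => G x - x with hgdef
    have hGd : ∀ x : ℝ, HasDerivAt G (β * (1 / Real.cosh (β * x) ^ 2)) x := by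
      intro x
      have := (tanh_hasDerivAt (β * x)).comp x ((hasDerivAt_id x).const_mul β)
      rw [show β * (1 / Real.cosh (β * x) ^ 2) = 1 / Real.cosh (β * x) ^ 2 * (β * 1) by ring]
      exact this
    have hgd : ∀ x : ℝ, HasDerivAt g (β * (1 / Real.cosh (β * x) ^ 2) - 1) x :=
      fun x => (hGd x).sub (hasDerivAt_id x)
    have hGc : Continuous G := continuous_tanh'.comp (continuous_const.mul continuous_id)
    have hgc : Continuous g := hGc.sub continuous_id
    have hG0 : G 0 = 0 := by simp [hGdef]
    -- g > 0 just right of 0 since g'(0) = β - 1 > 0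
    have hslope : Filter.Tendsto (slope g 0) (nhdsWithin 0 {(0:ℝ)}ᶜ)
        (nhds (β * (1 / Real.cosh (β * 0) ^ 2) - 1)) :=
      (hasDerivAt_iff_tendsto_slope).1 (hgd 0)
    have hval : β * (1 / Real.cosh (β * 0) ^ 2) - 1 = β - 1 := by simp
    rw [hval] at hslope
    have hev : ∀ᶠ x in nhdsWithin 0 {(0:ℝ)}ᶜ, 0 < slope g 0 x :=
      hslope.eventually (eventually_gt_nhds (by linarith))
    have hle : nhdsWithin (0:ℝ) (Ioi 0) ≤ nhdsWithin 0 {(0:ℝ)}ᶜ :=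
      nhdsWithin_mono 0 (fun x hx => ne_of_gt hx)
    have hev2 : ∀ᶠ x in nhdsWithin (0:ℝ) (Ioi 0), 0 < slope g 0 x ∧ x < 1 :=
      (hev.filter_mono hle).and (eventually_nhdsWithin_of_eventually_nhds (eventually_lt_nhds one_pos))
    obtain ⟨c, ⟨hc1, hc2⟩, hc0⟩ := (hev2.and self_mem_nhdsWithin).exists
    have hc0 : (0:ℝ) < c := hc0
    have hg0 : g 0 = 0 := by simp [hgdef, hG0]
    have hgc_pos : 0 < g c := by
      have h' : slope g 0 c = g c / c := by
        rw [slope_def_field, hg0, sub_zero, sub_zero]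
      rw [h'] at hc1
      have := mul_pos hc1 hc0
      rwa [div_mul_cancel₀ _ (ne_of_gt hc0)] at this
    have hg1_neg : g 1 < 0 := by
      have := tanh_lt_one' (β * 1)
      simp only [hgdef, hGdef]
      linarith
    -- IVT on [c, 1]
    have hc1' : c ≤ 1 := le_of_lt hc2
    have hmem : (0:ℝ) ∈ Icc (g 1) (g c) := ⟨le_of_lt hg1_neg, le_of_lt hgc_pos⟩
    obtain ⟨m, hmIcc, hgm⟩ := intermediate_value_Icc' hc1' hgc.continuousOn hmem
    have hm_pos : 0 < m := lt_of_lt_of_le hc0 hmIcc.1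
    have hGm : G m = m := by
      have : G m - m = 0 := hgm
      linarith
    -- strict concavity of G on [0, ∞)
    have hconc : StrictConcaveOn ℝ (Ici (0:ℝ)) G := by
      apply StrictAntiOn.strictConcaveOn_of_deriv (convex_Ici 0) hGc.continuousOn
      intro x hx y hy hxy
      rw [interior_Ici] at hx hy
      rw [(hGd x).deriv, (hGd y).deriv]
      have hx' : 0 < x := hx
      have hy' : 0 < y := hy
      have hcx : Real.cosh (β * x) < Real.cosh (β * y) := by
        rw [Real.cosh_lt_cosh]
        rw [abs_of_pos (mul_pos hβ0 hx'), abs_of_pos (mul_pos hβ0 hy')]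
        exact mul_lt_mul_of_pos_left hxy hβ0
      have h1 : (0:ℝ) < Real.cosh (β * x) := Real.cosh_pos _
      have h2 : Real.cosh (β * x) ^ 2 < Real.cosh (β * y) ^ 2 := by nlinarith
      have : 1 / Real.cosh (β * y) ^ 2 < 1 / Real.cosh (β * x) ^ 2 := by
        apply one_div_lt_one_div_of_lt (by positivity) h2
      exact mul_lt_mul_of_pos_left this hβ0
    -- uniqueness of the positive fixed point
    have huniq : ∀ p : ℝ, 0 < p → G p = p → p = m := by
      intro p hp hGp
      by_contra hne
      rcases lt_or_gt_of_ne hne with h | h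
      · have := concave_ratio hconc hG0 hp h
        rw [hGm, hGp] at this
        have : p / m * m < p := this
        rw [div_mul_cancel₀ _ (ne_of_gt hm_pos)] at this
        exact lt_irrefl _ this
      · have := concave_ratio hconc hG0 hm_pos h
        rw [hGm, hGp] at this
        have : m / p * p < m := this
        rw [div_mul_cancel₀ _ (ne_of_gt hp)] at this
        exact lt_irrefl _ this
    refine ⟨m, hm_pos, fun x => ⟨fun h => ?_, fun h => ?_⟩⟩
    · rcases lt_trichotomy x 0 with hx | hx | hx
      · right; right
        have hGx : G (-x) = -x := by
          simp only [hGdef, mul_neg, Real.tanh_neg]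
          linarith
        have := huniq (-x) (by linarith) hGx
        linarith
      · left; exact hx
      · right; left; exact huniq x hx h
    · rcases h with rfl | rfl | rfl
      · simp
      · exact hGm
      · show Real.tanh (β * (-m)) = -m
        rw [show β * (-m) = -(β * m) by ring, Real.tanh_neg]
        have : Real.tanh (β * m) = m := hGm
        rw [this]
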